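/- arXiv:1502.03622 — 10 statements merged into one kernel-verified Lean document; each statement's English description precedes it below -/
import Mathlib

section
/- Classical bar induction: Let Q be a predicate on finite sequences of natural numbers. If (1) for every α : ℕ → ℕ there exists n such that Q holds of the initial segment (α 0, …, α (n−1)), and (2) for every finite sequence t, if Q(t ++ [x]) holds for every x : ℕ then Q(t) holds, then Q holds of the empty sequence. -/
/-- Initial segment ᾱn = [α 0, …, α (n−1)]. -/
def initSeg (α : ℕ → ℕ) (n : ℕ) : List ℕ := (List.range n).map α

private def barSeq (f : List ℕ → ℕ) : ℕ → List ℕ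
  | 0 => []
  | n + 1 => barSeq f n ++ [f (barSeq f n)]

/-- Classical bar induction. -/
theorem bar_induction (Q : List ℕ → Prop)
    (hbar : ∀ α : ℕ → ℕ, ∃ n, Q (initSeg α n))
    (hind : ∀ t : List ℕ, (∀ x : ℕ, Q (t ++ [x])) → Q t) :
    Q [] := by
  by_contra hQ
  have key : ∀ t : List ℕ, ∃ x, ¬ Q t → ¬ Q (t ++ [x]) := by
    intro t
    by_cases ht : Q t
    · exact ⟨0, fun h => absurd ht h⟩
    · by_contra h
      push_neg at h
      exact ht (hind t (fun x => (h x).2))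
  choose f hf using key
  set α : ℕ → ℕ := fun n => f (barSeq f n) with hα
  have hseq : ∀ n, initSeg α n = barSeq f n := by
    intro n
    induction n with
    | zero => rfl
    | succ n ih =>
      simp only [initSeg, List.range_succ, List.map_append, List.map_cons, List.map_nil]
      rw [show (List.range n).map α = initSeg α n from rfl, ih]
      rfl
  have hbad : ∀ n, ¬ Q (barSeq f n) := by
    intro n
    induction n with
    | zero => exact hQ
    | succ n ih => exact hf (barSeq f n) ih
  obtain ⟨n, hn⟩ := hbar α
  rw [hseq n] at hn
  exact hbad n hn
end

section
/- Every pointwise continuous functional on Baire space is uniformly continuous on Cantor space: if Y : (ℕ → ℕ) → ℕ satisfies ∀ f, ∃ N, ∀ g, (∀ i < N, f i = g i) → Y f = Y g, then there exists N₀ such that for all f, g : ℕ → ℕ with f i ≤ 1 and g i ≤ 1 for all i, if f i = g i for all i < N₀ then Y f = Y g. -/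
/-- Every pointwise continuous functional on Baire space is uniformly
continuous on Cantor space. -/
theorem uniform_continuity_on_cantor (Y : (ℕ → ℕ) → ℕ)
    (hY : ∀ f : ℕ → ℕ, ∃ N, ∀ g : ℕ → ℕ, (∀ i < N, f i = g i) → Y f = Y g) :
    ∃ N₀ : ℕ, ∀ f g : ℕ → ℕ, (∀ i, f i ≤ 1) → (∀ i, g i ≤ 1) →
      (∀ i < N₀, f i = g i) → Y f = Y g := by
  classical
  set C : Set (ℕ → ℕ) := Set.pi Set.univ (fun _ => Set.Iic 1) with hC
  have hCcomp : IsCompact C :=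
    isCompact_univ_pi (fun _ => (Set.finite_Iic 1).isCompact)
  set N : (ℕ → ℕ) → ℕ := fun f => (hY f).choose with hN
  set U : (ℕ → ℕ) → Set (ℕ → ℕ) := fun f => {g | ∀ i < N f, f i = g i} with hU
  have hUopen : ∀ f, IsOpen (U f) := by
    intro f
    have : U f = ⋂ i ∈ Finset.range (N f), (fun g : ℕ → ℕ => g i) ⁻¹' {f i} := by
      ext g
      simp [hU, Finset.mem_range, eq_comm]
    rw [this]
    exact isOpen_biInter_finset fun i _ =>
      (continuous_apply i).isOpen_preimage _ (isOpen_discrete _)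
  have hcover : C ⊆ ⋃ f : (ℕ → ℕ), U f := fun f _ =>
    Set.mem_iUnion.2 ⟨f, fun i _ => rfl⟩
  obtain ⟨t, ht⟩ := hCcomp.elim_finite_subcover U hUopen hcover
  refine ⟨t.sup N, fun f g hf hg hfg => ?_⟩
  have hfC : f ∈ C := fun i _ => hf i
  obtain ⟨h, hht, hfU⟩ := Set.mem_iUnion₂.1 (ht hfC)
  have hNle : N h ≤ t.sup N := Finset.le_sup hht
  have h1 : Y h = Y f := (hY h).choose_spec f hfU
  have h2 : Y h = Y g := (hY h).choose_spec g (fun i hi =>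
    (hfU i hi).trans (hfg i (lt_of_lt_of_le hi hNle)))
  rw [← h1, h2]
end

section
/- Weak König's lemma: if T is a set of finite binary sequences closed under initial segments which contains sequences of every length, then there exists α : ℕ → ℕ with α i ≤ 1 for all i such that every initial segment of α belongs to T. -/
/-- A node is good if it has extensions in `T` of every length. -/
def WKLgood (T : Set (List ℕ)) (s : List ℕ) : Prop :=
  ∀ n : ℕ, ∃ t ∈ T, n ≤ t.length ∧ s <+: t

lemma WKLgood_mem (T : Set (List ℕ))
    (hclosed : ∀ s ∈ T, ∀ t : List ℕ, t <+: s → t ∈ T)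
    {s : List ℕ} (hs : WKLgood T s) : s ∈ T := by
  obtain ⟨t, htT, _, hpre⟩ := hs 0
  exact hclosed t htT s hpre

lemma WKLgood_step (T : Set (List ℕ))
    (hbin : ∀ s ∈ T, ∀ x ∈ s, x ≤ 1)
    (hclosed : ∀ s ∈ T, ∀ t : List ℕ, t <+: s → t ∈ T)
    {s : List ℕ} (hs : WKLgood T s) :
    ∃ b : ℕ, WKLgood T (s ++ [b]) := by
  by_contra h
  push_neg at h
  have h0 := h 0; have h1 := h 1
  rw [WKLgood] at h0 h1
  push_neg at h0 h1
  obtain ⟨n0, hn0⟩ := h0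
  obtain ⟨n1, hn1⟩ := h1
  obtain ⟨t, htT, hlen, hpre⟩ := hs (max (max n0 n1) (s.length + 1))
  have hslen : s.length < t.length := by omega
  have hb : s ++ [t.get ⟨s.length, hslen⟩] <+: t := by
    obtain ⟨u, rfl⟩ := hpre
    have hu : u ≠ [] := by
      intro h'; subst h'; simp at hslen
    obtain ⟨c, u', rfl⟩ := List.exists_cons_of_ne_nil hu
    have : (s ++ c :: u').get ⟨s.length, hslen⟩ = c := by
      simp [List.getElem_append_right]
    rw [this]
    exact ⟨u', by simp⟩
  set b := t.get ⟨s.length, hslen⟩ with hbdef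
  have hble : b ≤ 1 := hbin t htT _ (t.get_mem _)
  interval_cases b
  · exact hn0 t htT (by omega) hb
  · exact hn1 t htT (by omega) hb

/-- Weak König's lemma: an infinite binary tree has a path. -/
theorem weak_koenig_lemma (T : Set (List ℕ))
    (hbin : ∀ s ∈ T, ∀ x ∈ s, x ≤ 1)
    (hclosed : ∀ s ∈ T, ∀ t : List ℕ, t <+: s → t ∈ T)
    (hinf : ∀ n : ℕ, ∃ β ∈ T, β.length = n) :
    ∃ α : ℕ → ℕ, (∀ i, α i ≤ 1) ∧ ∀ n : ℕ, initSeg α n ∈ T := by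
  have hnil : WKLgood T [] := by
    intro n
    obtain ⟨β, hβ, hl⟩ := hinf n
    exact ⟨β, hβ, hl.ge, List.nil_prefix⟩
  -- build sequence of good nodes
  let F : ∀ n : ℕ, {s : List ℕ // WKLgood T s ∧ s.length = n} := fun n =>
    Nat.rec ⟨[], hnil, rfl⟩
      (fun _ p => ⟨p.1 ++ [Classical.choose (WKLgood_step T hbin hclosed p.2.1)],
        Classical.choose_spec (WKLgood_step T hbin hclosed p.2.1),
        by simp [p.2.2]⟩) n
  set α : ℕ → ℕ := fun i => ((F (i+1)).1).getD i 0 with hα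
  have hseg : ∀ n, initSeg α n = (F n).1 := by
    intro n
    induction n with
    | zero => rfl
    | succ n ih =>
      have hstep : (F (n+1)).1 = (F n).1 ++
          [Classical.choose (WKLgood_step T hbin hclosed (F n).2.1)] := rfl
      have hαn : α n = Classical.choose (WKLgood_step T hbin hclosed (F n).2.1) := by
        rw [hα]
        simp only [hstep]
        rw [List.getD_eq_getElem?_getD, List.getElem?_append_right (by simp [(F n).2.2])]
        simp [(F n).2.2]
      rw [initSeg, List.range_succ, List.map_append, ← initSeg, ih, hstep]
      simp only [List.map_cons, List.map_nil, hαn]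
  have hmemT : ∀ n, initSeg α n ∈ T := fun n => by
    rw [hseg]; exact WKLgood_mem T hclosed (F n).2.1
  refine ⟨α, fun i => ?_, hmemT⟩
  have : α i ∈ initSeg α (i+1) := by
    simp [initSeg, List.mem_map]
    exact ⟨i, by omega, rfl⟩
  exact hbin _ (hmemT (i+1)) _ this
end

section
/- Construction of the special fan functional from the fan functional: suppose Ω : ((ℕ → ℕ) → ℕ) → ℕ satisfies that for all Y and all binary f, g agreeing up to Ω(Y), Y f = Y g. Given g : (ℕ → ℕ) → ℕ, let k := max over binary strings σ of length Ω(g) of g(σ ++ 0^ω), and let W be the (finite) set of sequences τ ++ 0^ω for binary τ of length k. Then for every set T of finite binary sequences closed under prefixes: if for every α ∈ W one has the initial segment of α of length g(α) not in T, then for every binary β : ℕ → ℕ there is i ≤ k such that the initial segment of β of length i is not in T. -/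
/-- Extension of a finite binary sequence given by a function on `Fin n` by zeros. -/
def finExt {n : ℕ} (σ : Fin n → Fin 2) : ℕ → ℕ :=
  fun i => if h : i < n then (σ ⟨i, h⟩ : ℕ) else 0

/-- Construction of the special fan functional from the fan functional `Ω`. -/
theorem special_fan_from_fan (Ω : ((ℕ → ℕ) → ℕ) → ℕ)
    (hΩ : ∀ Y : (ℕ → ℕ) → ℕ, ∀ f g : ℕ → ℕ, (∀ i, f i ≤ 1) → (∀ i, g i ≤ 1) →
      (∀ i < Ω Y, f i = g i) → Y f = Y g)
    (g : (ℕ → ℕ) → ℕ) :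
    let k : ℕ := Finset.univ.sup (fun σ : Fin (Ω g) → Fin 2 => g (finExt σ))
    let W : Set (ℕ → ℕ) := {α | ∃ τ : Fin k → Fin 2, α = finExt τ}
    ∀ T : Set (List ℕ),
      (∀ s ∈ T, ∀ x ∈ s, x ≤ 1) →
      (∀ s ∈ T, ∀ t : List ℕ, t <+: s → t ∈ T) →
      (∀ α ∈ W, initSeg α (g α) ∉ T) →
      ∀ β : ℕ → ℕ, (∀ i, β i ≤ 1) → ∃ i ≤ k, initSeg β i ∉ T := by
  intro k W T _hT1 _hT2 hW β hβ
  set τ : Fin k → Fin 2 := fun i => ⟨β i, Nat.lt_succ_of_le (hβ i)⟩ with hτ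
  have hβτ : ∀ j < k, finExt τ j = β j := by
    intro j hj
    simp [finExt, hj, hτ]
  -- restriction of finExt τ to length Ω g
  set σ : Fin (Ω g) → Fin 2 := fun i =>
    if h : (i : ℕ) < k then τ ⟨i, h⟩ else 0 with hσ
  have hagree : g (finExt τ) = g (finExt σ) := by
    apply hΩ g
    · intro i
      unfold finExt
      split <;> simp [hτ, hβ, Fin.is_le]
    · intro i
      unfold finExt
      split <;> first | exact Fin.is_le _ | simp
    · intro i hi
      simp only [finExt, hi, dif_pos, hσ]
      by_cases h : i < k <;> simp [h]
  have hk : g (finExt τ) ≤ k := by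
    rw [hagree]
    exact Finset.le_sup (f := fun σ : Fin (Ω g) → Fin 2 => g (finExt σ)) (Finset.mem_univ σ)
  refine ⟨g (finExt τ), hk, ?_⟩
  have hseg : initSeg β (g (finExt τ)) = initSeg (finExt τ) (g (finExt τ)) := by
    unfold initSeg
    apply List.map_congr_left
    intro j hj
    rw [List.mem_range] at hj
    exact (hβτ j (lt_of_lt_of_le hj hk)).symm
  rw [hseg]
  exact hW (finExt τ) ⟨τ, rfl⟩
end

section
/- Stabilization of the canonical approximation: let Y : (ℕ → ℕ) → ℕ be pointwise continuous on Baire space. Define G(Y, s, N) by recursion on N − |s|: G(Y, s, N) = Y(s ++ 0^ω) if |s| ≥ N, and otherwise G(Y, s, N) = Y(β) where β is the infinite sequence given by β i = s i for i < |s|, β(|s|) = 0, and β(|s| + 1 + n) = G(Y, s ++ [n+1], N). Then for every finite sequence s there exists K such that G(Y, s, N) = G(Y, s, M) for all N, M ≥ K. -/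
/-- Extension of a finite sequence by zeros. -/
def ext0 (s : List ℕ) : ℕ → ℕ := fun i => s.getD i 0

/-- The canonical approximation `G` of the Gandy–Hyland functional. -/
def G (Y : (ℕ → ℕ) → ℕ) (s : List ℕ) (N : ℕ) : ℕ :=
  if _h : s.length ≥ N then Y (ext0 s)
  else Y (fun i =>
    if i < s.length then s.getD i 0
    else if i = s.length then 0
    else G Y (s ++ [i - s.length]) N)
termination_by N - s.length
decreasing_by
  simp only [List.length_append, List.length_singleton]
  omega

/-- Stabilization of the canonical approximation for pointwise continuous `Y`. -/
theorem G_stabilizes (Y : (ℕ → ℕ) → ℕ)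
    (hY : ∀ f : ℕ → ℕ, ∃ N, ∀ g : ℕ → ℕ, (∀ i < N, f i = g i) → Y f = Y g)
    (s : List ℕ) :
    ∃ K : ℕ, ∀ N M : ℕ, K ≤ N → K ≤ M → G Y s N = G Y s M := by
  classical
  set P : List ℕ → Prop :=
    fun t => ∃ K : ℕ, ∀ N M : ℕ, K ≤ N → K ≤ M → G Y t N = G Y t M with hPdef
  -- Hereditary condition: if all children stabilize, so does `t`.
  have hered : ∀ t : List ℕ, (∀ m : ℕ, P (t ++ [m + 1])) → P t := by
    intro t ht
    choose Kc hKc using ht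
    set β : ℕ → ℕ := fun i =>
      if i < t.length then t.getD i 0
      else if i = t.length then 0
      else G Y (t ++ [i - t.length]) (Kc (i - t.length - 1)) with hβ
    obtain ⟨N₀, hN₀⟩ := hY β
    refine ⟨t.length + 1 + (Finset.range N₀).sup Kc, ?_⟩
    have key : ∀ N, t.length + 1 + (Finset.range N₀).sup Kc ≤ N → G Y t N = Y β := by
      intro N hN
      rw [G, dif_neg (by omega)]
      refine (hN₀ _ ?_).symm
      intro i hi
      simp only [hβ]
      by_cases h1 : i < t.length
      · simp [h1]
      · by_cases h2 : i = t.length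
        · simp [h1, h2]
        · simp only [if_neg h1, if_neg h2]
          have hm1 : i - t.length = (i - t.length - 1) + 1 := by omega
          have hmem : i - t.length - 1 ∈ Finset.range N₀ := by
            simp only [Finset.mem_range]; omega
          have hsup : Kc (i - t.length - 1) ≤ (Finset.range N₀).sup Kc :=
            Finset.le_sup hmem
          rw [hm1]
          exact hKc (i - t.length - 1) (Kc _) N le_rfl (by omega)
    intro N M hN hM
    rw [key N hN, key M hM]
  -- Bar condition: long prefixes of any infinite path stabilize.
  have bar : ∀ f : ℕ → ℕ, ∃ N₀ : ℕ, ∀ t : List ℕ, N₀ ≤ t.length →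
      (∀ i < t.length, t.getD i 0 = f i) → P t := by
    intro f
    obtain ⟨N₀, hN₀⟩ := hY f
    refine ⟨N₀, fun t hlen hpre => ⟨t.length + 1, ?_⟩⟩
    have key : ∀ N, t.length + 1 ≤ N → G Y t N = Y f := by
      intro N hN
      rw [G, dif_neg (by omega)]
      refine (hN₀ _ ?_).symm
      intro i hi
      have hi' : i < t.length := lt_of_lt_of_le hi hlen
      simp [hi', (hpre i hi').symm]
    intro N M hN hM
    rw [key N hN, key M hM]
  -- Main argument by contradiction and dependent choice.
  by_contra hns
  have hns' : ¬ P s := hns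
  have step : ∀ t : List ℕ, ∃ m : ℕ, ¬ P t → ¬ P (t ++ [m + 1]) := by
    intro t
    by_cases ht : P t
    · exact ⟨0, fun h => absurd ht h⟩
    · by_contra h
      push_neg at h
      exact ht (hered t fun m => (h m).2)
  choose F hF using step
  set T : ℕ → List ℕ := fun n => Nat.rec s (fun _ t => t ++ [F t + 1]) n with hT
  have hTsucc : ∀ n, T (n + 1) = T n ++ [F (T n) + 1] := fun n => rfl
  have hTbad : ∀ n, ¬ P (T n) := by
    intro n
    induction n with
    | zero => exact hns'
    | succ n ih => rw [hTsucc]; exact hF (T n) ih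
  have hTlen : ∀ n, (T n).length = s.length + n := by
    intro n
    induction n with
    | zero => rfl
    | succ n ih => rw [hTsucc]; simp [ih]; omega
  have hpref : ∀ n m, n ≤ m → T n <+: T m := by
    intro n m hnm
    induction m with
    | zero => simp_all
    | succ m ih =>
      rcases Nat.lt_or_ge n (m + 1) with h | h
      · exact (ih (by omega)).trans (hTsucc m ▸ List.prefix_append _ _)
      · have : n = m + 1 := by omega
        subst this; exact List.prefix_refl _
  have getD_pref : ∀ (l₁ l₂ : List ℕ) (i : ℕ), l₁ <+: l₂ → i < l₁.length →
      l₁.getD i 0 = l₂.getD i 0 := by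
    rintro l₁ l₂ i ⟨u, rfl⟩ hi
    rw [List.getD_eq_getElem _ _ hi,
      List.getD_eq_getElem _ _ (by simp [List.length_append]; omega),
      List.getElem_append_left hi]
  set f : ℕ → ℕ := fun i => (T (i + 1)).getD i 0 with hf
  have hagree : ∀ n, ∀ i < (T n).length, (T n).getD i 0 = f i := by
    intro n i hi
    have hlen1 : i < (T (i + 1)).length := by
      have := hTlen (i + 1); omega
    rcases Nat.le_total n (i + 1) with h | h
    · exact getD_pref _ _ _ (hpref n (i + 1) h) hi
    · exact (getD_pref _ _ _ (hpref (i + 1) n h) hlen1).symm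
  obtain ⟨N₀, hbar⟩ := bar f
  exact hTbad N₀ (hbar (T N₀) (by rw [hTlen]; omega) (hagree N₀))
end

section
/- Existence of the Gandy–Hyland functional on continuous arguments: for every pointwise continuous Y : (ℕ → ℕ) → ℕ there exists Γ_Y : List ℕ → ℕ such that for all finite sequences s, Γ_Y(s) = Y(β) where β i = s i for i < |s|, β(|s|) = 0, and β(|s| + 1 + n) = Γ_Y(s ++ [n+1]). -/
/-- The infinite sequence `β` associated to `Γ` and `s` in the Gandy–Hyland equation:
`β i = s i` for `i < |s|`, `β |s| = 0`, and `β (|s| + 1 + n) = Γ (s ++ [n+1])`. -/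
def ghSeq (Γ : List ℕ → ℕ) (s : List ℕ) : ℕ → ℕ := fun i =>
  if i < s.length then s.getD i 0
  else if i = s.length then 0
  else Γ (s ++ [i - s.length])

namespace GHaux

noncomputable section
open Classical

variable (Y : (ℕ → ℕ) → ℕ)

/-- Canonical approximations with fuel `k`. -/
def H : ℕ → List ℕ → ℕ
  | 0 => fun s => Y fun i => s.getD i 0
  | (k+1) => fun s => Y (ghSeq (H k) s)

def Stab (s : List ℕ) : Prop := ∃ k₀, ∀ k, k₀ ≤ k → H Y k s = H Y k₀ s

def idx (s : List ℕ) : ℕ := if h : Stab Y s then h.choose else 0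

def limP (s : List ℕ) : ℕ := H Y (idx Y s) s

lemma limP_spec {s : List ℕ} (h : Stab Y s) {k : ℕ} (hk : idx Y s ≤ k) :
    H Y k s = limP Y s := by
  unfold limP idx at *
  rw [dif_pos h] at *
  exact h.choose_spec k hk

lemma getD_of_prefix {l₁ l₂ : List ℕ} (h : l₁ <+: l₂) {i : ℕ} (hi : i < l₁.length) :
    l₂.getD i 0 = l₁.getD i 0 := by
  obtain ⟨r, rfl⟩ := h
  exact List.getD_append _ _ _ _ hi

lemma ghSeq_agree (Γ : List ℕ → ℕ) (s : List ℕ) {i : ℕ} (hi : i < s.length) :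
    ghSeq Γ s i = s.getD i 0 := by
  simp [ghSeq, hi]

/-- If a node `s` is long enough and agrees with `α` up to a modulus of `Y` at `α`,
then all approximations at `s` equal `Y α`. -/
lemma deep_const {α : ℕ → ℕ} {N : ℕ}
    (hN : ∀ g : ℕ → ℕ, (∀ i < N, α i = g i) → Y α = Y g)
    {s : List ℕ} (hlen : N ≤ s.length) (hagree : ∀ i < N, α i = s.getD i 0) :
    ∀ k, H Y k s = Y α := by
  intro k
  induction k with
  | zero => exact (hN _ hagree).symm
  | succ k ih =>
    have : H Y (k+1) s = Y (ghSeq (H Y k) s) := rfl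
    rw [this]
    refine (hN _ ?_).symm
    intro i hi
    rw [ghSeq_agree _ _ (lt_of_lt_of_le hi hlen)]
    exact hagree i hi

/-- Inductive step: if all proper children stabilize, so does `s`. -/
lemma stab_of_children (hY : ∀ f : ℕ → ℕ, ∃ N, ∀ g : ℕ → ℕ, (∀ i < N, f i = g i) → Y f = Y g) {s : List ℕ} (hc : ∀ m, Stab Y (s ++ [m+1])) : Stab Y s := by
  obtain ⟨N, hN⟩ := hY (ghSeq (limP Y) s)
  set K := (Finset.range (N+1)).sup (fun j => idx Y (s ++ [j])) with hK
  have key : ∀ k, K ≤ k → H Y (k+1) s = Y (ghSeq (limP Y) s) := by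
    intro k hk
    have : H Y (k+1) s = Y (ghSeq (H Y k) s) := rfl
    rw [this]
    refine (hN _ ?_).symm
    intro i hi
    unfold ghSeq
    by_cases h1 : i < s.length
    · simp [h1]
    · by_cases h2 : i = s.length
      · simp [h1, h2]
      · simp only [if_neg h1, if_neg h2]
        have hgt : s.length < i := by omega
        have hj1 : 1 ≤ i - s.length := by omega
        have hstab : Stab Y (s ++ [i - s.length]) := by
          have := hc (i - s.length - 1)
          have he : i - s.length - 1 + 1 = i - s.length := by omega
          rwa [he] at this
        have hle : idx Y (s ++ [i - s.length]) ≤ k :=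
          le_trans (Finset.le_sup (f := fun j => idx Y (s ++ [j]))
            (Finset.mem_range.mpr (by omega))) hk
        exact (limP_spec Y hstab hle).symm
  have key' : ∀ k, K + 1 ≤ k → H Y k s = Y (ghSeq (limP Y) s) := by
    intro k hk
    obtain ⟨k', rfl⟩ : ∃ k', k = k' + 1 := ⟨k - 1, by omega⟩
    exact key k' (by omega)
  exact ⟨K + 1, fun k hk => (key' k hk).trans (key' (K+1) le_rfl).symm⟩

/-- Every node stabilizes. -/
lemma allStab (hY : ∀ f : ℕ → ℕ, ∃ N, ∀ g : ℕ → ℕ, (∀ i < N, f i = g i) → Y f = Y g) : ∀ s, Stab Y s := by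
  intro s
  by_contra hs
  have step : ∀ l, ¬ Stab Y l → ∃ m, ¬ Stab Y (l ++ [m+1]) := by
    intro l hl
    by_contra h
    push_neg at h
    exact hl (stab_of_children Y hY h)
  -- build the infinite branch of non-stabilizing nodes
  let F : {l : List ℕ // ¬ Stab Y l} → {l : List ℕ // ¬ Stab Y l} :=
    fun p => ⟨p.1 ++ [(step p.1 p.2).choose + 1], (step p.1 p.2).choose_spec⟩
  let t : ℕ → {l : List ℕ // ¬ Stab Y l} := fun n => F^[n] ⟨s, hs⟩
  have ht_succ : ∀ n, (t (n+1)).1 = (t n).1 ++ [(step (t n).1 (t n).2).choose + 1] := by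
    intro n
    show (F^[n+1] _).1 = _
    rw [Function.iterate_succ_apply']
  have htpre : ∀ n, (t n).1 <+: (t (n+1)).1 := by
    intro n; rw [ht_succ n]; exact ⟨_, rfl⟩
  have htmono : ∀ n m, n ≤ m → (t n).1 <+: (t m).1 := by
    intro n m hnm
    induction m with
    | zero => simp_all
    | succ m ih =>
      rcases Nat.lt_or_ge n (m+1) with h | h
      · exact (ih (by omega)).trans (htpre m)
      · have : n = m + 1 := by omega
        subst this; exact List.prefix_rfl
  have htlen : ∀ n, (t n).1.length = s.length + n := by
    intro n
    induction n with
    | zero => rfl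
    | succ n ih =>
      rw [ht_succ n]
      simp only [List.length_append, List.length_singleton, ih]
      omega
  set α : ℕ → ℕ := fun i => (t (i+1)).1.getD i 0 with hα
  have hagree : ∀ n, ∀ i < (t n).1.length, α i = (t n).1.getD i 0 := by
    intro n i hi
    rcases Nat.le_total n (i+1) with h | h
    · exact getD_of_prefix (htmono n (i+1) h) hi
    · exact (getD_of_prefix (htmono (i+1) n h) (by rw [htlen]; omega)).symm
  obtain ⟨N, hN⟩ := hY α
  have hdeep : ∀ k, H Y k (t N).1 = Y α := by
    refine deep_const Y hN ?_ (fun i hi => hagree N i ?_)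
    · rw [htlen]; omega
    · rw [htlen]; omega
  exact (t N).2 ⟨0, fun k _ => (hdeep k).trans (hdeep 0).symm⟩

end
end GHaux

/-- Existence of the Gandy–Hyland functional on a pointwise continuous argument. -/
theorem gandy_hyland_exists (Y : (ℕ → ℕ) → ℕ)
    (hY : ∀ f : ℕ → ℕ, ∃ N, ∀ g : ℕ → ℕ, (∀ i < N, f i = g i) → Y f = Y g) :
    ∃ Γ : List ℕ → ℕ, ∀ s : List ℕ, Γ s = Y (ghSeq Γ s) := by
  classical
  refine ⟨GHaux.limP Y, fun s => ?_⟩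
  obtain ⟨N, hN⟩ := hY (ghSeq (GHaux.limP Y) s)
  set K := max (GHaux.idx Y s) ((Finset.range (N+1)).sup (fun j => GHaux.idx Y (s ++ [j]))) with hK
  have h1 : GHaux.limP Y s = GHaux.H Y (K+1) s :=
    (GHaux.limP_spec Y (GHaux.allStab Y hY s) (le_trans (le_max_left _ _) (Nat.le_succ_of_le le_rfl))).symm
  rw [h1]
  have h2 : GHaux.H Y (K+1) s = Y (ghSeq (GHaux.H Y K) s) := rfl
  rw [h2]
  refine (hN _ ?_).symm
  intro i hi
  unfold ghSeq
  by_cases ha : i < s.length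
  · simp [ha]
  · by_cases hb : i = s.length
    · simp [ha, hb]
    · simp only [if_neg ha, if_neg hb]
      have hle : GHaux.idx Y (s ++ [i - s.length]) ≤ K := by
        refine le_trans ?_ (le_max_right _ _)
        refine Finset.le_sup (f := fun j => GHaux.idx Y (s ++ [j])) ?_
        exact Finset.mem_range.mpr (by omega)
      exact (GHaux.limP_spec Y (GHaux.allStab Y hY _) hle).symm
end

section
/- Uniqueness of the Gandy–Hyland functional on continuous arguments: let Y : (ℕ → ℕ) → ℕ be pointwise continuous, and suppose Γ₁, Γ₂ : List ℕ → ℕ both satisfy the Gandy–Hyland equation Γ(s) = Y(β_Γ,s) for all s, where β_Γ,s i = s i for i < |s|, β_Γ,s(|s|) = 0, and β_Γ,s(|s| + 1 + n) = Γ(s ++ [n+1]). Then Γ₁ = Γ₂. -/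
lemma ghSeq_lt (Γ : List ℕ → ℕ) (s : List ℕ) (i : ℕ) (h : i < s.length) :
    ghSeq Γ s i = s.getD i 0 := by simp [ghSeq, h]

lemma getD_of_prefix {l₁ l₂ : List ℕ} (h : l₁ <+: l₂) {i : ℕ} (hi : i < l₁.length) :
    l₁.getD i 0 = l₂.getD i 0 := by
  obtain ⟨u, rfl⟩ := h
  rw [List.getD_append _ _ _ _ hi]

/-- Uniqueness of the Gandy–Hyland functional on pointwise continuous arguments. -/
theorem gandy_hyland_unique (Y : (ℕ → ℕ) → ℕ)
    (hY : ∀ f : ℕ → ℕ, ∃ N, ∀ g : ℕ → ℕ, (∀ i < N, f i = g i) → Y f = Y g)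
    (Γ₁ Γ₂ : List ℕ → ℕ)
    (h₁ : ∀ s : List ℕ, Γ₁ s = Y (ghSeq Γ₁ s))
    (h₂ : ∀ s : List ℕ, Γ₂ s = Y (ghSeq Γ₂ s)) :
    Γ₁ = Γ₂ := by
  classical
  have hstep : ∀ t : List ℕ, (∀ n, Γ₁ (t ++ [n]) = Γ₂ (t ++ [n])) → Γ₁ t = Γ₂ t := by
    intro t ht
    have hgh : ghSeq Γ₁ t = ghSeq Γ₂ t := by
      funext i
      unfold ghSeq
      split_ifs with hh1 hh2
      · rfl
      · rfl
      · exact ht _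
    rw [h₁, h₂, hgh]
  funext s
  by_contra hne
  have hstep' : ∀ t : List ℕ, Γ₁ t ≠ Γ₂ t → ∃ n, Γ₁ (t ++ [n]) ≠ Γ₂ (t ++ [n]) := by
    intro t h
    by_contra hc
    push_neg at hc
    exact h (hstep t hc)
  set ext : List ℕ → ℕ := fun t =>
    if h : Γ₁ t ≠ Γ₂ t then Classical.choose (hstep' t h) else 0 with hextdef
  have hext : ∀ t, Γ₁ t ≠ Γ₂ t → Γ₁ (t ++ [ext t]) ≠ Γ₂ (t ++ [ext t]) := by
    intro t h
    have hs := Classical.choose_spec (hstep' t h)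
    simp only [hextdef]
    rw [dif_pos h]
    exact hs
  set T : ℕ → List ℕ := fun k => Nat.rec s (fun _ u => u ++ [ext u]) k with hTdef
  have hTsucc : ∀ k, T (k + 1) = T k ++ [ext (T k)] := fun k => rfl
  have hTne : ∀ k, Γ₁ (T k) ≠ Γ₂ (T k) := by
    intro k
    induction k with
    | zero => exact hne
    | succ k ih => rw [hTsucc]; exact hext _ ih
  have hTlen : ∀ k, (T k).length = s.length + k := by
    intro k
    induction k with
    | zero => rfl
    | succ k ih => rw [hTsucc]; simp [ih]; omega
  have hTpref : ∀ k m, k ≤ m → T k <+: T m := by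
    intro k m hkm
    induction m with
    | zero =>
      have : k = 0 := Nat.le_zero.mp hkm
      subst this; exact List.prefix_refl _
    | succ m ih =>
      rcases Nat.lt_or_ge k (m + 1) with h | h
      · exact (ih (Nat.lt_succ_iff.mp h)).trans (by rw [hTsucc]; exact List.prefix_append _ _)
      · have : k = m + 1 := le_antisymm hkm h
        subst this; exact List.prefix_refl _
  set f : ℕ → ℕ := fun i => (T (i + 1)).getD i 0 with hfdef
  have hf : ∀ k i, i < (T k).length → f i = (T k).getD i 0 := by
    intro k i hi
    rcases Nat.le_total (i + 1) k with h | h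
    · exact getD_of_prefix (hTpref _ _ h) (by have := hTlen (i + 1); omega)
    · exact (getD_of_prefix (hTpref _ _ h) hi).symm
  obtain ⟨N, hN⟩ := hY f
  have hagree : ∀ Γ : List ℕ → ℕ, Y f = Y (ghSeq Γ (T N)) := by
    intro Γ
    apply hN
    intro i hi
    have hi' : i < (T N).length := by rw [hTlen]; omega
    rw [ghSeq_lt _ _ _ hi']
    exact hf N i hi'
  exact hTne N (by rw [h₁, h₂, ← hagree Γ₁, ← hagree Γ₂])
end

section
/- Agreement of G on long initial segments, uniformly in N: let Y : (ℕ → ℕ) → ℕ be pointwise continuous, let s be a finite sequence and α : ℕ → ℕ. If M is a modulus of continuity of Y at the sequence s⌢α (s followed by α), then for all n ≥ M and all N, G(Y, s ++ ᾱn, N) = Y(s⌢α). -/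
/-- `s⌢α`: the finite sequence `s` followed by the infinite sequence `α`. -/
def catSeq (s : List ℕ) (α : ℕ → ℕ) : ℕ → ℕ := fun i =>
  if i < s.length then s.getD i 0 else α (i - s.length)

/-- Agreement of `G` on long initial segments, uniformly in `N`. -/
theorem G_on_long_segments (Y : (ℕ → ℕ) → ℕ)
    (hY : ∀ f : ℕ → ℕ, ∃ N, ∀ g : ℕ → ℕ, (∀ i < N, f i = g i) → Y f = Y g)
    (s : List ℕ) (α : ℕ → ℕ) (M : ℕ)
    (hM : ∀ g : ℕ → ℕ, (∀ i < M, catSeq s α i = g i) → Y g = Y (catSeq s α)) :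
    ∀ n : ℕ, M ≤ n → ∀ N : ℕ, G Y (s ++ initSeg α n) N = Y (catSeq s α) := by

  intro n hn N
  set t := s ++ initSeg α n with ht
  have hlen : t.length = s.length + n := by simp [ht, initSeg]
  have hagree : ∀ i < t.length, t.getD i 0 = catSeq s α i := by
    intro i hi
    by_cases h : i < s.length
    · rw [ht, List.getD_append _ _ _ _ h]
      simp [catSeq, h]
    · have hs : s.length ≤ i := le_of_not_gt h
      have hi' : i - s.length < n := by omega
      simp only [catSeq, h, if_false, ht]
      rw [List.getD_append_right _ _ _ _ hs]
      simp [initSeg, List.getD_eq_getElem?_getD, hi']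
  rw [G]
  split
  · apply hM
    intro i hiM
    have : i < t.length := by omega
    simp only [ext0]
    exact (hagree i this).symm
  · apply hM
    intro i hiM
    have hit : i < t.length := by omega
    simp only [hit, if_true]
    exact (hagree i hit).symm
end

section
/- Uniform continuity on bounded products: let h : ℕ → ℕ, and let Y : (ℕ → ℕ) → ℕ be pointwise continuous. Then there exists N such that for all f, g : ℕ → ℕ with f i ≤ h i and g i ≤ h i for all i, if f i = g i for all i < N, then Y f = Y g. -/
/-- Uniform continuity of a pointwise continuous functional on `{f : ∀ i, f i ≤ h i}`. -/
theorem uniform_continuity_on_bounded (h : ℕ → ℕ) (Y : (ℕ → ℕ) → ℕ)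
    (hY : ∀ f : ℕ → ℕ, ∃ N, ∀ g : ℕ → ℕ, (∀ i < N, f i = g i) → Y f = Y g) :
    ∃ N : ℕ, ∀ f g : ℕ → ℕ, (∀ i, f i ≤ h i) → (∀ i, g i ≤ h i) →
      (∀ i < N, f i = g i) → Y f = Y g := by
  classical
  choose N hN using hY
  let X := ∀ i : ℕ, Fin (h i + 1)
  let c : X → (ℕ → ℕ) := fun x i => (x i : ℕ)
  let U : X → Set X := fun x => {y | ∀ i < N (c x), y i = x i}
  have hUopen : ∀ x, IsOpen (U x) := by
    intro x
    have : U x = ⋂ i ∈ Finset.range (N (c x)), {y : X | y i = x i} := by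
      ext y; simp [U, Finset.mem_range]
    rw [this]
    apply isOpen_biInter_finset
    intro i _
    exact (continuous_apply (A := fun i => Fin (h i + 1)) i).isOpen_preimage {x i} (isOpen_discrete _)
  have hcover : (Set.univ : Set X) ⊆ ⋃ x : X, U x := by
    intro y _
    exact Set.mem_iUnion.2 ⟨y, fun i _ => rfl⟩
  obtain ⟨t, ht⟩ := isCompact_univ.elim_finite_subcover U hUopen hcover
  refine ⟨t.sup (fun x => N (c x)), ?_⟩
  intro f g hf hg hfg
  let xf : X := fun i => ⟨f i, Nat.lt_succ_of_le (hf i)⟩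
  obtain ⟨x, hx, hxf⟩ : ∃ x ∈ t, xf ∈ U x := by
    have := ht (Set.mem_univ xf)
    simpa using this
  have hNle : N (c x) ≤ t.sup (fun x => N (c x)) := Finset.le_sup (f := fun x => N (c x)) hx
  have h1 : Y (c x) = Y f := by
    apply hN
    intro i hi
    have := hxf i hi
    simpa [c, xf] using congrArg (Fin.val) this.symm
  have h2 : Y (c x) = Y g := by
    apply hN
    intro i hi
    have e1 : (c x) i = f i := by
      have := hxf i hi
      simpa [c, xf] using congrArg (Fin.val) this.symm
    rw [e1]
    exact hfg i (lt_of_lt_of_le hi hNle)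
  rw [← h1, h2]
end

section
/- Agreement of the two canonical approximations: let Y : (ℕ → ℕ) → ℕ be pointwise continuous and s a finite sequence. Define G(Y, t, N) = Y(t ++ 0^ω) if |t| ≥ N and otherwise G(Y, t, N) = Y(t, then 0, then (λ n, G(Y, t ++ [n+1], N))); define H(Y, t, N) = Y((t truncated to length N) ++ 0^ω) if |t| ≥ N, and otherwise H(Y, t, N) = Y(β) where β i = t i for i < |t|, β(|t|) = 0, β(|t| + 1 + n) = H(Y, t ++ [n+1], N) for n < N, and β(|t| + 1 + n) = 0 for n ≥ N. Then there exists K such that for all N ≥ K, G(Y, s, N) = H(Y, s, N). -/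
/-- The more finitary canonical approximation `H` of the Gandy–Hyland functional:
it truncates the sequence at length `N` in the base case and pads the child
values by zeros after index `N`. -/
def H (Y : (ℕ → ℕ) → ℕ) (s : List ℕ) (N : ℕ) : ℕ :=
  if _h : s.length ≥ N then Y (ext0 (s.take N))
  else Y (fun i =>
    if i < s.length then s.getD i 0
    else if i = s.length then 0
    else if i - s.length - 1 < N then H Y (s ++ [i - s.length]) N
    else 0)
termination_by N - s.length
decreasing_by
  simp only [List.length_append, List.length_singleton]
  omega

/-- Joint stabilization predicate: beyond some threshold both `G` and `H`
take a common constant value. -/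
def Pstab (Y : (ℕ → ℕ) → ℕ) (t : List ℕ) : Prop :=
  ∃ K c, ∀ N, K ≤ N → G Y t N = c ∧ H Y t N = c

theorem Pstab_step (Y : (ℕ → ℕ) → ℕ)
    (hY : ∀ f : ℕ → ℕ, ∃ N, ∀ g : ℕ → ℕ, (∀ i < N, f i = g i) → Y f = Y g)
    (t : List ℕ) (hch : ∀ n : ℕ, Pstab Y (t ++ [n + 1])) : Pstab Y t := by
  choose Kf cf hcf using hch
  set α : ℕ → ℕ := fun i =>
    if i < t.length then t.getD i 0
    else if i = t.length then 0
    else cf (i - t.length - 1) with hα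
  obtain ⟨M, hM⟩ := hY α
  set K := max (t.length + 1) (max M ((Finset.range M).sup Kf)) with hK
  refine ⟨K, Y α, fun N hN => ?_⟩
  have hlen : ¬ t.length ≥ N := by
    have : t.length + 1 ≤ K := le_max_left _ _
    omega
  have hMN : M ≤ N := le_trans (le_trans (le_max_left _ _) (le_max_right _ _)) hN
  have hKn : ∀ n, n < M → Kf n ≤ N := fun n hn =>
    le_trans (le_trans (Finset.le_sup (Finset.mem_range.mpr hn))
      (le_trans (le_max_right _ _) (le_max_right _ _))) hN
  constructor
  · rw [G, dif_neg hlen]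
    refine (hM _ fun i hi => ?_).symm
    by_cases h1 : i < t.length
    · simp [hα, h1]
    · by_cases h2 : i = t.length
      · simp [hα, h1, h2]
      · have hgt : t.length < i := by omega
        obtain ⟨n, hn⟩ : ∃ n, i - t.length = n + 1 := ⟨i - t.length - 1, by omega⟩
        have hnM : n < M := by omega
        simp only [hα, if_neg h1, if_neg h2, hn, Nat.add_sub_cancel]
        exact ((hcf n N (hKn n hnM)).1).symm
  · rw [H, dif_neg hlen]
    refine (hM _ fun i hi => ?_).symm
    by_cases h1 : i < t.length
    · simp [hα, h1]
    · by_cases h2 : i = t.length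
      · simp [hα, h1, h2]
      · have hgt : t.length < i := by omega
        obtain ⟨n, hn⟩ : ∃ n, i - t.length = n + 1 := ⟨i - t.length - 1, by omega⟩
        have hnM : n < M := by omega
        have hlt : i - t.length - 1 < N := by omega
        simp only [hα, if_neg h1, if_neg h2, hn, Nat.add_sub_cancel]
        rw [if_pos (show n < N by omega)]
        exact ((hcf n N (hKn n hnM)).2).symm

/-- Agreement of the two canonical approximations for continuous `Y`. -/
theorem G_eq_H_eventually (Y : (ℕ → ℕ) → ℕ)
    (hY : ∀ f : ℕ → ℕ, ∃ N, ∀ g : ℕ → ℕ, (∀ i < N, f i = g i) → Y f = Y g)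
    (s : List ℕ) :
    ∃ K : ℕ, ∀ N : ℕ, K ≤ N → G Y s N = H Y s N := by
  suffices h : Pstab Y s by
    obtain ⟨K, c, hc⟩ := h
    exact ⟨K, fun N hN => by rw [(hc N hN).1, (hc N hN).2]⟩
  by_contra hs
  have hstep : ∀ t : List ℕ, ¬ Pstab Y t → ∃ n : ℕ, ¬ Pstab Y (t ++ [n + 1]) := by
    intro t ht
    by_contra h
    push_neg at h
    exact ht (Pstab_step Y hY t h)
  let tseq : ℕ → {t : List ℕ // ¬ Pstab Y t} := fun k =>
    Nat.rec ⟨s, hs⟩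
      (fun _ p => ⟨p.1 ++ [Classical.choose (hstep p.1 p.2) + 1],
        Classical.choose_spec (hstep p.1 p.2)⟩) k
  have hsucc : ∀ k, ∃ x : ℕ, (tseq (k + 1)).1 = (tseq k).1 ++ [x] :=
    fun k => ⟨_, rfl⟩
  have hlen : ∀ k, (tseq k).1.length = s.length + k := by
    intro k
    induction k with
    | zero => rfl
    | succ k ih =>
      obtain ⟨x, hx⟩ := hsucc k
      rw [hx, List.length_append, ih, List.length_singleton]
      omega
  have hpre : ∀ k i, i < (tseq k).1.length → ∀ m, k ≤ m →
      (tseq m).1.getD i 0 = (tseq k).1.getD i 0 := by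
    intro k i hi m hm
    induction m, hm using Nat.le_induction with
    | base => rfl
    | succ m hm ih =>
      obtain ⟨x, hx⟩ := hsucc m
      rw [hx, List.getD_append _ _ _ _ (lt_of_lt_of_le hi (by rw [hlen k, hlen m]; omega)), ih]
  set f : ℕ → ℕ := fun i => (tseq (i + 1)).1.getD i 0 with hf
  have hfi : ∀ k i, i < (tseq k).1.length → (tseq k).1.getD i 0 = f i := by
    intro k i hi
    rcases le_total k (i + 1) with h | h
    · exact (hpre k i hi (i + 1) h).symm
    · exact hpre (i + 1) i (by have := hlen (i + 1); omega) k h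
  obtain ⟨m, hm⟩ := hY f
  refine (tseq m).2 ⟨(tseq m).1.length + 1, Y f, fun N hN => ?_⟩
  have hlenm : m ≤ (tseq m).1.length := by rw [hlen]; omega
  have hnotge : ¬ (tseq m).1.length ≥ N := by omega
  constructor
  · rw [G, dif_neg hnotge]
    refine (hm _ fun i hi => ?_).symm
    have h1 : i < (tseq m).1.length := lt_of_lt_of_le hi hlenm
    simp only [if_pos h1]
    exact (hfi m i h1).symm
  · rw [H, dif_neg hnotge]
    refine (hm _ fun i hi => ?_).symm
    have h1 : i < (tseq m).1.length := lt_of_lt_of_le hi hlenm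
    simp only [if_pos h1]
    exact (hfi m i h1).symm
end
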